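/- Assume the rank-2 roots setup. Let λ = (λ_1 ≥ λ_2 ≥ 0) be a partition with 2k+2 < λ_1 ≤ 3k+1. For an integer d ≥ 0, set f_1(z) = z^d (1 − z^{-1})^{λ_1 + 1} and f_2(z) = z^d (1 − z^{-1})^{λ_2}, and let c_d denote the coefficient of T^d in any polynomial F ∈ ℚ[T] with F(τ) = s_{(f_1,f_2)}(z_1,…,z_N). If λ_2 < 2N, then c_d = 0 for d ≤ 2 and c_d = 1 for d ≥ 3; if λ_2 ≥ 2N, then c_d = 0 for d ≤ 3 and c_d = 1 for d ≥ 4. -/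

import Mathlib

open Polynomial

namespace Stmt11Aux

/-- Coefficient vectors (in the `(X-1)`-basis) of `(X-1)^b * X^p` modulo
`(X-1)^N + T*X^(N-2)`, as polynomials in `T` over `ℚ`. -/
noncomputable def cv (N b : ℕ) : ℕ → ℕ → Polynomial ℚ
  | 0, j => if j = b then 1 else 0
  | p+1, j => cv N b p j + (if j = 0 then 0 else cv N b p (j-1))
      - C (((N-2).choose j : ℚ)) * (X * cv N b p (N-1))

/-- Top-slice values. -/
def tv (N j e : ℕ) : ℚ := if e = 0 then 1 else if N-2 ≤ j then (-1)^e else 0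

/-- The invariant. -/
def Inv (N m : ℕ) (c : ℕ → Polynomial ℚ) : Prop :=
  ∀ j e : ℕ, j < N →
    (m < j + 2*e → (c j).coeff e = 0) ∧
    (j + 2*e = m → (c j).coeff e = tv N j e)

lemma coeff_step (N b p j e : ℕ) :
    (cv N b (p+1) j).coeff e = (cv N b p j).coeff e
      + (if j = 0 then 0 else (cv N b p (j-1)).coeff e)
      - ((N-2).choose j : ℚ) * (if e = 0 then 0 else (cv N b p (N-1)).coeff (e-1)) := by
  show ((cv N b p j + (if j = 0 then 0 else cv N b p (j-1))
      - C (((N-2).choose j : ℚ)) * (X * cv N b p (N-1))).coeff e) = _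
  rw [coeff_sub, coeff_add, coeff_C_mul]
  congr 1
  · congr 1
    split <;> simp
  · congr 1
    cases e with
    | zero => simp [mul_coeff_zero]
    | succ e' => simp [coeff_X_mul]

lemma inv_cv (N : ℕ) (hN : 4 ≤ N) (b : ℕ) (hb : b < N) :
    ∀ p : ℕ, Inv N (p + b) (cv N b p) := by
  intro p
  induction p with
  | zero =>
    intro j e hj
    constructor
    · intro hgt
      show ((if j = b then 1 else 0 : Polynomial ℚ)).coeff e = 0
      split
      · subst j
        have he : e ≠ 0 := by omega
        simp [coeff_one, he]
      · simp
    · intro heq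
      show ((if j = b then 1 else 0 : Polynomial ℚ)).coeff e = tv N j e
      rcases Nat.eq_zero_or_pos e with he | he
      · subst e
        have : j = b := by omega
        subst this
        simp [tv]
      · have he0 : e ≠ 0 := by omega
        have hjb : j ≠ b := by omega
        rw [if_neg hjb, tv, if_neg he0, if_neg (by omega : ¬ N - 2 ≤ j)]
        simp
  | succ p IH =>
    intro j e hj
    constructor
    · intro hgt
      rw [coeff_step]
      rw [(IH j e hj).1 (by omega)]
      have h2 : (if j = 0 then (0:ℚ) else (cv N b p (j-1)).coeff e) = 0 := by
        split
        · rfl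
        · exact (IH (j-1) e (by omega)).1 (by omega)
      rw [h2]
      have h3 : ((N-2).choose j : ℚ) * (if e = 0 then 0 else (cv N b p (N-1)).coeff (e-1)) = 0 := by
        rcases Nat.eq_zero_or_pos e with he | he
        · simp [he]
        · have he0 : e ≠ 0 := by omega
          rcases Nat.lt_or_ge j (N-1) with hj2 | hj2
          · have hz : (cv N b p (N-1)).coeff (e-1) = 0 :=
              (IH (N-1) (e-1) (by omega)).1 (by omega)
            rw [if_neg he0, hz, mul_zero]
          · have : (N-2).choose j = 0 := Nat.choose_eq_zero_of_lt (by omega)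
            simp [this]
      rw [h3]
      ring
    · intro heq
      rw [coeff_step]
      have h1 : (cv N b p j).coeff e = 0 := (IH j e hj).1 (by omega)
      rw [h1]
      rcases Nat.eq_zero_or_pos e with he | he
      · -- e = 0 : j = p+1+b ≥ 1
        subst he
        have hj0 : j ≠ 0 := by omega
        have h2 : (cv N b p (j-1)).coeff 0 = tv N (j-1) 0 :=
          (IH (j-1) 0 (by omega)).2 (by omega)
        rw [if_neg hj0, h2, tv, if_pos rfl, tv, if_pos rfl, if_pos rfl]
        ring
      · have he0 : e ≠ 0 := by omega
        rcases Nat.lt_or_ge j (N-2) with hcase | hcase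
        · -- j ≤ N-3 : everything vanishes
          have h2 : (if j = 0 then (0:ℚ) else (cv N b p (j-1)).coeff e) = 0 := by
            split
            · rfl
            · rw [(IH (j-1) e (by omega)).2 (by omega), tv, if_neg he0,
                if_neg (by omega : ¬ N - 2 ≤ j - 1)]
          have h3 : (cv N b p (N-1)).coeff (e-1) = 0 :=
            (IH (N-1) (e-1) (by omega)).1 (by omega)
          rw [h2, h3, tv, if_neg he0, if_neg (by omega : ¬ N - 2 ≤ j), if_neg he0, mul_zero]
          ring
        · rcases Nat.lt_or_ge j (N-1) with hcase2 | hcase2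
          · -- j = N-2
            have hj0 : j ≠ 0 := by omega
            have h2 : (cv N b p (j-1)).coeff e = 0 := by
              rw [(IH (j-1) e (by omega)).2 (by omega), tv, if_neg he0,
                if_neg (by omega : ¬ N - 2 ≤ j - 1)]
            have h3 : (cv N b p (N-1)).coeff (e-1) = tv N (N-1) (e-1) :=
              (IH (N-1) (e-1) (by omega)).2 (by omega)
            have hch : (N-2).choose j = 1 := by
              have : j = N - 2 := by omega
              rw [this]; exact Nat.choose_self _
            rw [if_neg hj0, h2, h3, hch, tv, tv, if_neg he0, if_neg he0,
              if_pos (by omega : N - 2 ≤ j)]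
            have hpow : ((-1:ℚ))^e = -(-1)^(e-1) := by
              conv_lhs => rw [show e = (e-1)+1 by omega]
              rw [pow_succ]; ring
            rcases Nat.eq_zero_or_pos (e-1) with he1 | he1
            · rw [if_pos (by omega : e - 1 = 0), hpow, he1]
              norm_num
            · have he1' : e - 1 ≠ 0 := by omega
              rw [if_neg he1', if_pos (by omega : N - 2 ≤ N - 1), hpow]
              ring
          · -- j = N-1
            have hj0 : j ≠ 0 := by omega
            have h2 : (cv N b p (j-1)).coeff e = tv N (j-1) e :=
              (IH (j-1) e (by omega)).2 (by omega)
            have hch : (N-2).choose j = 0 := Nat.choose_eq_zero_of_lt (by omega)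
            rw [if_neg hj0, h2, hch, tv, tv, if_neg he0, if_neg he0,
              if_pos (by omega : N - 2 ≤ j - 1), if_pos (by omega : N - 2 ≤ j)]
            push_cast
            rw [if_neg he0]
            ring


abbrev RR := Polynomial (Polynomial ℚ)

/-- The modulus polynomial `(X-1)^N + T·X^(N-2)` over `A = ℚ[T]`. -/
noncomputable def Pm (N : ℕ) : RR :=
  (X - C 1)^N + C X * X^(N-2)

lemma Pm_monic (N : ℕ) (hN : 1 ≤ N) : (Pm N).Monic := by
  have h1 : (((X : RR) - C 1)^N).degree = (N : WithBot ℕ) := by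
    rw [degree_pow, degree_X_sub_C, nsmul_eq_mul, mul_one]
  apply Polynomial.Monic.add_of_left ((monic_X_sub_C (1 : Polynomial ℚ)).pow N)
  rw [h1]
  calc (C (X : Polynomial ℚ) * X^(N-2) : RR).degree
      ≤ (C (X : Polynomial ℚ) : RR).degree + ((X : RR)^(N-2)).degree :=
        degree_mul_le _ _
    _ ≤ 0 + ((N - 2 : ℕ) : WithBot ℕ) := by
        apply add_le_add degree_C_le
        rw [degree_X_pow]
    _ < (N : WithBot ℕ) := by
        rw [zero_add, Nat.cast_lt]
        omega

/-- The reduced polynomial `(X-1)^b X^p mod Pm` assembled from `cv`. -/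
noncomputable def pol (N b p : ℕ) : RR :=
  ∑ i ∈ Finset.range N, C (cv N b p i) * (X - C 1)^i

lemma binom_sum (N : ℕ) (hN : 1 ≤ N) :
    ∑ j ∈ Finset.range N, (((N-2).choose j : RR)) * ((X : RR) - C 1)^j
      = (X : RR)^(N-2) := by
  calc ∑ j ∈ Finset.range N, (((N-2).choose j : RR)) * ((X : RR) - C 1)^j
      = ∑ j ∈ Finset.range (N-2+1), (((N-2).choose j : RR)) * ((X : RR) - C 1)^j := by
        refine (Finset.sum_subset (Finset.range_subset_range.mpr (by omega : N - 2 + 1 ≤ N)) ?_).symm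
        intro j hj hj2
        have : (N-2).choose j = 0 := Nat.choose_eq_zero_of_lt (by
          simp only [Finset.mem_range] at hj hj2; omega)
        simp [this]
    _ = ∑ j ∈ Finset.range (N-2+1), ((X : RR) - C 1)^j * 1^(N-2-j) * ((N-2).choose j : RR) := by
        apply Finset.sum_congr rfl
        intro j _
        ring
    _ = (((X : RR) - C 1) + 1)^(N-2) := (add_pow _ _ _).symm
    _ = (X : RR)^(N-2) := by
        rw [show ((X : RR) - C 1) + 1 = X by rw [C_1]; ring]

lemma pol_step (N : ℕ) (hN : 1 ≤ N) (b p : ℕ) :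
    X * pol N b p = pol N b (p+1) + C (cv N b p (N-1)) * Pm N := by
  obtain ⟨n, rfl⟩ : ∃ n, N = n + 1 := ⟨N-1, by omega⟩
  have hsub : n + 1 - 1 = n := by omega
  have hcv : ∀ j, cv (n+1) b (p+1) j = cv (n+1) b p j + (if j = 0 then 0 else cv (n+1) b p (j-1))
      - C (((n+1-2).choose j : ℚ)) * (X * cv (n+1) b p (n+1-1)) := fun j => rfl
  have e1 : pol (n+1) b (p+1)
      = (∑ j ∈ Finset.range (n+1), C (cv (n+1) b p j) * (X - C 1)^j)
        + (∑ j ∈ Finset.range (n+1), C (if j = 0 then 0 else cv (n+1) b p (j-1)) * (X - C 1)^j)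
        - (C (X : Polynomial ℚ) * C (cv (n+1) b p n)) *
            ∑ j ∈ Finset.range (n+1), (((n+1-2).choose j : RR)) * ((X : RR) - C 1)^j := by
    rw [pol, Finset.mul_sum, ← Finset.sum_add_distrib, ← Finset.sum_sub_distrib]
    apply Finset.sum_congr rfl
    intro j _
    rw [hcv j, hsub, map_sub, map_add, map_mul, map_mul, map_natCast (C : ℚ →+* Polynomial ℚ), map_natCast (C : Polynomial ℚ →+* RR)]
    ring
  have hshift : ∑ j ∈ Finset.range (n+1),
        (C (if j = 0 then 0 else cv (n+1) b p (j-1)) : RR) * (X - C 1)^j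
      = ∑ i ∈ Finset.range n, C (cv (n+1) b p i) * (X - C 1)^(i+1) := by
    rw [Finset.sum_range_succ']
    simp
  have hXpol : X * pol (n+1) b p
      = (∑ i ∈ Finset.range n, C (cv (n+1) b p i) * (X - C 1)^(i+1))
        + C (cv (n+1) b p n) * (X - C 1)^(n+1)
        + ∑ j ∈ Finset.range (n+1), C (cv (n+1) b p j) * (X - C 1)^j := by
    rw [pol, Finset.mul_sum]
    rw [Finset.sum_congr rfl (fun i _ => show (X:RR) * (C (cv (n+1) b p i) * (X - C 1)^i)
        = C (cv (n+1) b p i) * (X - C 1)^(i+1) + C (cv (n+1) b p i) * (X - C 1)^i by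
      rw [C_1]; ring)]
    rw [Finset.sum_add_distrib, Finset.sum_range_succ
      (fun i => (C (cv (n+1) b p i) : RR) * (X - C 1)^(i+1))]
  rw [hXpol, e1, binom_sum (n+1) (by omega), hshift, Pm, hsub]
  ring

lemma pol_zero (N b : ℕ) (hb : b < N) : pol N b 0 = ((X : RR) - C 1)^b := by
  rw [pol]
  rw [Finset.sum_eq_single b]
  · show (C (if b = b then 1 else 0) : RR) * _ = _
    simp
  · intro i _ hne
    show (C (if i = b then 1 else 0) : RR) * _ = 0
    simp [hne]
  · intro hb'
    exact absurd (Finset.mem_range.mpr hb) hb'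

lemma pol_spec (N : ℕ) (hN : 1 ≤ N) (b : ℕ) (hb : b < N) (p : ℕ) :
    ∃ h : RR, ((X : RR) - C 1)^b * X^p = pol N b p + h * Pm N := by
  induction p with
  | zero => exact ⟨0, by rw [pol_zero N b hb]; simp⟩
  | succ p ih =>
    obtain ⟨h, ih⟩ := ih
    refine ⟨C (cv N b p (N-1)) + X * h, ?_⟩
    have : ((X : RR) - C 1)^b * X^(p+1) = X * (((X : RR) - C 1)^b * X^p) := by ring
    rw [this, ih, mul_add, pol_step N hN b p]
    ring

lemma pol_natDegree_lt (N b p : ℕ) (hN : 1 ≤ N) : (pol N b p).natDegree < N := by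
  have h : (pol N b p).natDegree ≤ N - 1 := by
    apply Polynomial.natDegree_sum_le_of_forall_le
    intro i hi
    calc ((C (cv N b p i) : RR) * (X - C 1)^i).natDegree
        ≤ (C (cv N b p i) : RR).natDegree + (((X : RR) - C 1)^i).natDegree :=
          natDegree_mul_le
      _ ≤ 0 + i := by
          apply add_le_add (le_of_eq (natDegree_C _))
          rw [natDegree_pow, natDegree_X_sub_C, mul_one]
      _ ≤ N - 1 := by simp only [Finset.mem_range] at hi; omega
  omega

lemma polY_coeff (i c : ℕ) : ((((X : RR) - C 1))^i).coeff c
    = (-1 : Polynomial ℚ)^(i-c) * (i.choose c : Polynomial ℚ) := by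
  rw [show ((X : RR) - C 1) = X + C (-1) by rw [map_neg, map_one]; ring]
  rw [coeff_X_add_C_pow]

lemma pol_coeff_top (N b p : ℕ) (hN : 1 ≤ N) :
    (pol N b p).coeff (N-1) = cv N b p (N-1) := by
  rw [pol, finset_sum_coeff]
  rw [Finset.sum_eq_single (N-1)]
  · rw [coeff_C_mul, polY_coeff, Nat.sub_self, Nat.choose_self]
    simp
  · intro i hi hne
    rw [coeff_C_mul, polY_coeff]
    have : i.choose (N-1) = 0 := Nat.choose_eq_zero_of_lt (by
      simp only [Finset.mem_range] at hi; omega)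
    simp [this]
  · intro h
    exact absurd (Finset.mem_range.mpr (by omega)) h

lemma pol_coeff_next (N b p : ℕ) (hN : 2 ≤ N) :
    (pol N b p).coeff (N-2) = cv N b p (N-2) - ((N-1 : ℕ) : Polynomial ℚ) * cv N b p (N-1) := by
  obtain ⟨m, rfl⟩ : ∃ m, N = m + 2 := ⟨N-2, by omega⟩
  have h1 : m + 2 - 2 = m := by omega
  have h2 : m + 2 - 1 = m + 1 := by omega
  rw [pol, finset_sum_coeff, h1, h2]
  rw [Finset.sum_range_succ, Finset.sum_range_succ]
  rw [Finset.sum_eq_zero]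
  · rw [coeff_C_mul, coeff_C_mul, polY_coeff, polY_coeff, Nat.sub_self, Nat.choose_self,
      show m + 1 - m = 1 by omega, Nat.choose_succ_self_right]
    push_cast
    ring
  · intro i hi
    rw [coeff_C_mul, polY_coeff]
    have : i.choose m = 0 := Nat.choose_eq_zero_of_lt (by
      simp only [Finset.mem_range] at hi; omega)
    simp [this]

lemma coeff_mul_zero_of (f g : Polynomial ℚ) (E : ℕ)
    (h : ∀ x y : ℕ, x + y = E → f.coeff x = 0 ∨ g.coeff y = 0) :
    (f * g).coeff E = 0 := by
  rw [coeff_mul]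
  apply Finset.sum_eq_zero
  rintro ⟨x, y⟩ hxy
  rw [Finset.HasAntidiagonal.mem_antidiagonal] at hxy
  rcases h x y hxy with h' | h' <;> simp [h']

lemma coeff_mul_single (f g : Polynomial ℚ) (E x0 y0 : ℕ) (hx : x0 + y0 = E)
    (h : ∀ x y : ℕ, x + y = E → ¬(x = x0 ∧ y = y0) → f.coeff x = 0 ∨ g.coeff y = 0) :
    (f * g).coeff E = f.coeff x0 * g.coeff y0 := by
  rw [coeff_mul]
  rw [Finset.sum_eq_single (x0, y0)]
  · rintro ⟨x, y⟩ hxy hne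
    rw [Finset.HasAntidiagonal.mem_antidiagonal] at hxy
    have : ¬(x = x0 ∧ y = y0) := by
      intro ⟨h1, h2⟩
      exact hne (by rw [h1, h2])
    rcases h x y hxy this with h' | h' <;> simp [h']
  · intro hmem
    exact absurd (Finset.HasAntidiagonal.mem_antidiagonal.mpr hx) hmem

lemma tv_hi (N j e : ℕ) (hj : N - 2 ≤ j) : tv N j e = (-1)^e := by
  rw [tv, if_pos hj]
  split
  · rename_i h; rw [h, pow_zero]
  · rfl

lemma coeff_pow_mul_lt (f : Polynomial ℚ) (k E : ℕ) (h : E < k) :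
    ((X : Polynomial ℚ)^k * f).coeff E = 0 := by
  rw [coeff_mul]
  apply Finset.sum_eq_zero
  rintro ⟨x, y⟩ hxy
  rw [Finset.HasAntidiagonal.mem_antidiagonal] at hxy
  rw [coeff_X_pow, if_neg (by omega)]
  ring

lemma Pm_degree (N : ℕ) (hN : 1 ≤ N) : (Pm N).degree = N := by
  rw [Pm]
  rw [degree_add_eq_left_of_degree_lt]
  · rw [degree_pow, degree_X_sub_C, nsmul_eq_mul, mul_one]
  · have h1 : (((X : RR) - C 1)^N).degree = (N : WithBot ℕ) := by
      rw [degree_pow, degree_X_sub_C, nsmul_eq_mul, mul_one]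
    rw [h1]
    calc (C (X : Polynomial ℚ) * X^(N-2) : RR).degree
        ≤ (C (X : Polynomial ℚ) : RR).degree + ((X : RR)^(N-2)).degree :=
          degree_mul_le _ _
      _ ≤ 0 + ((N - 2 : ℕ) : WithBot ℕ) := by
          apply add_le_add degree_C_le
          rw [degree_X_pow]
      _ < (N : WithBot ℕ) := by
          rw [zero_add, Nat.cast_lt]
          omega

lemma Pm_coeff_zero (N : ℕ) (hN : 3 ≤ N) : (Pm N).coeff 0 = (-1 : Polynomial ℚ)^N := by
  rw [Pm, coeff_add, polY_coeff, coeff_C_mul, coeff_X_pow, if_neg (by omega : ¬ 0 = N - 2)]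
  simp

noncomputable def Qs (N : ℕ) : RR := -(C ((-1 : Polynomial ℚ)^N)) * divX (Pm N)

lemma X_mul_Qs (N : ℕ) (hN : 3 ≤ N) :
    (X : RR) * Qs N = 1 - C ((-1 : Polynomial ℚ)^N) * Pm N := by
  have hsq : (C ((-1 : Polynomial ℚ)^N) : RR) * C ((-1 : Polynomial ℚ)^N) = 1 := by
    rw [← map_mul, ← pow_add, Even.neg_one_pow ⟨N, rfl⟩, map_one]
  have hdx : (X : RR) * divX (Pm N) = Pm N - C ((Pm N).coeff 0) := by
    have := X_mul_divX_add (Pm N)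
    linear_combination this
  rw [Qs]
  calc (X : RR) * (-(C ((-1 : Polynomial ℚ)^N)) * divX (Pm N))
      = -(C ((-1 : Polynomial ℚ)^N)) * ((X : RR) * divX (Pm N)) := by ring
    _ = -(C ((-1 : Polynomial ℚ)^N)) * (Pm N - C ((Pm N).coeff 0)) := by rw [hdx]
    _ = 1 - C ((-1 : Polynomial ℚ)^N) * Pm N := by
        rw [Pm_coeff_zero N hN]
        linear_combination hsq

/-- `(X-1)^b X^E Qs^lam mod Pm` agrees with `pol N b q` when `E = q + lam`. -/
lemma mod_eq_pol (N : ℕ) (hN : 3 ≤ N) (b q lam E : ℕ) (hb : b < N) (hE : E = q + lam) :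
    (((X : RR) - C 1)^b * X^E * Qs N^lam) %ₘ Pm N = pol N b q := by
  have hmonic := Pm_monic N (by omega)
  obtain ⟨h, hh⟩ := pol_spec N (by omega) b hb q
  -- (X*Qs)^lam = 1 + k * Pm
  have hdvd : Pm N ∣ ((1 - C ((-1 : Polynomial ℚ)^N) * Pm N)^lam - 1) := by
    have h1 : ((1 - C ((-1 : Polynomial ℚ)^N) * Pm N) - 1) ∣
        ((1 - C ((-1 : Polynomial ℚ)^N) * Pm N)^lam - 1^lam) :=
      sub_dvd_pow_sub_pow _ _ _
    rw [one_pow] at h1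
    obtain ⟨t, ht⟩ := h1
    exact ⟨-(C ((-1 : Polynomial ℚ)^N)) * t, by rw [ht]; ring⟩
  obtain ⟨k, hk⟩ := hdvd
  have key : ((X : RR) - C 1)^b * X^E * Qs N^lam
      = pol N b q + (pol N b q * k + h + h * k * Pm N) * Pm N := by
    have e1 : ((X : RR) - C 1)^b * X^E * Qs N^lam
        = (((X : RR) - C 1)^b * X^q) * ((X * Qs N)^lam) := by
      rw [hE, pow_add, mul_pow]
      ring
    rw [e1, X_mul_Qs N hN]
    have e2 : ((1 : RR) - C ((-1 : Polynomial ℚ)^N) * Pm N)^lam = 1 + k * Pm N := by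
      linear_combination hk
    rw [e2, hh]
    ring
  have hdeg : (pol N b q).degree < (Pm N).degree := by
    rw [Pm_degree N (by omega)]
    calc (pol N b q).degree ≤ ((pol N b q).natDegree : WithBot ℕ) := degree_le_natDegree
      _ < (N : WithBot ℕ) := by
          rw [Nat.cast_lt]
          exact pol_natDegree_lt N b q (by omega)
  exact (div_modByMonic_unique (pol N b q * k + h + h * k * Pm N) (pol N b q) hmonic ⟨by rw [key]; ring, hdeg⟩).2

section KSide
variable {K : Type*} [Field K]

lemma evz_Pm (N : ℕ) (ψ : Polynomial ℚ →+* K) (y : K) :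
    eval₂ ψ y (Pm N) = (y - 1)^N + ψ X * y^(N-2) := by
  simp [Pm, eval₂_add, eval₂_mul, eval₂_pow, eval₂_sub, eval₂_X, eval₂_C]

lemma evz_Qs (N : ℕ) (hN : 3 ≤ N) (ψ : Polynomial ℚ →+* K) (y : K)
    (hy : eval₂ ψ y (Pm N) = 0) (hy0 : y ≠ 0) :
    eval₂ ψ y (Qs N) = y⁻¹ := by
  have h := congrArg (eval₂ ψ y) (X_mul_Qs N hN)
  rw [eval₂_mul, eval₂_X, eval₂_sub, eval₂_one, eval₂_mul, eval₂_C, hy, mul_zero, sub_zero] at h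
  exact (inv_eq_of_mul_eq_one_right h).symm

lemma evz_mod (N : ℕ) (hN1 : 1 ≤ N) (ψ : Polynomial ℚ →+* K) (y : K)
    (hy : eval₂ ψ y (Pm N) = 0) (g : RR) :
    eval₂ ψ y (g %ₘ Pm N) = eval₂ ψ y g := by
  conv_rhs => rw [← modByMonic_add_div g (Pm N)]
  rw [eval₂_add, eval₂_mul, hy, zero_mul, add_zero]

lemma evz_elt (N : ℕ) (hN : 3 ≤ N) (ψ : Polynomial ℚ →+* K) (y : K) (hy0 : y ≠ 0)
    (hy : eval₂ ψ y (Pm N) = 0) (b E lam : ℕ) :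
    eval₂ ψ y ((((X:RR) - C 1)^b * X^E * Qs N^lam) %ₘ Pm N)
      = (y - 1)^b * y^E * (y⁻¹)^lam := by
  rw [evz_mod N (by omega) ψ y hy, eval₂_mul, eval₂_mul, eval₂_pow, eval₂_pow, eval₂_pow,
    eval₂_sub, eval₂_X, eval₂_C, map_one, evz_Qs N hN ψ y hy hy0]

lemma row_reduce (N : ℕ) (τ y : K) (hy0 : y ≠ 0)
    (hrel : (y - 1)^N = -(τ * y^(N-2))) (lam b m E0 : ℕ) (hsplit : lam = m * N + b) :
    (1 - y⁻¹)^lam * y^E0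
      = (-τ)^m * ((y-1)^b * y^(E0 + m*(N-2)) * (y⁻¹)^lam) := by
  have h1 : (1 - y⁻¹) = (y - 1) * y⁻¹ := by field_simp
  rw [h1, mul_pow, hsplit, pow_add, pow_mul', hrel]
  rw [show (-(τ * y^(N-2)))^m = (-τ)^m * (y^(N-2))^m by rw [neg_mul_eq_neg_mul, mul_pow]]
  rw [← pow_mul, pow_add y E0 (m*(N-2)), Nat.mul_comm (N-2) m]
  ring

lemma rev_sum (m : ℕ) (f : ℕ → K) :
    ∑ c : Fin m, f (m - 1 - (c : ℕ)) = ∑ c ∈ Finset.range m, f c := by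
  rw [Fin.sum_univ_eq_sum_range (fun c => f (m-1-c)) m, Finset.sum_range_reflect]

lemma det_decomp (N : ℕ) (hN : 2 ≤ N) (z : Fin N → K) (M : Matrix (Fin N) (Fin N) K)
    (w1 w2 : ℕ → K)
    (hM0 : ∀ j, M ⟨0, by omega⟩ j = ∑ c ∈ Finset.range N, w1 c * z j ^ c)
    (hM1 : ∀ j, M ⟨1, by omega⟩ j = ∑ c ∈ Finset.range N, w2 c * z j ^ c)
    (hMi : ∀ (i : Fin N) (j : Fin N), 2 ≤ (i : ℕ) → M i j = z j ^ (N - 1 - (i : ℕ))) :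
    M.det = (w1 (N-1) * w2 (N-2) - w1 (N-2) * w2 (N-1)) *
      (Matrix.of fun i j : Fin N => z j ^ (N - 1 - (i : ℕ))).det := by
  obtain ⟨n, rfl⟩ : ∃ n, N = 2 + n := ⟨N - 2, by omega⟩
  set V : Matrix (Fin (2+n)) (Fin (2+n)) K :=
    Matrix.of (fun i j : Fin (2+n) => z j ^ (2 + n - 1 - (i : ℕ))) with hV
  set Cm : Matrix (Fin (2+n)) (Fin (2+n)) K := Matrix.of (fun i c : Fin (2+n) =>
    if (i : ℕ) = 0 then w1 (2 + n - 1 - (c : ℕ))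
    else if (i : ℕ) = 1 then w2 (2 + n - 1 - (c : ℕ))
    else if (i : ℕ) = (c : ℕ) then 1 else 0) with hCm
  have hMeq : M = Cm * V := by
    ext i j
    rw [Matrix.mul_apply]
    rcases i with ⟨iv, hiv⟩
    rcases Nat.lt_or_ge iv 2 with hlt | hge
    · interval_cases iv
      · rw [hM0 j]
        rw [Finset.sum_congr rfl (fun c (_ : c ∈ Finset.univ) =>
          (show Cm ⟨0, hiv⟩ c * V c j
              = w1 (2 + n - 1 - (c : ℕ)) * z j ^ (2 + n - 1 - (c : ℕ)) by
            simp [hCm, hV]))]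
        exact (rev_sum (2+n) (fun c => w1 c * z j ^ c)).symm
      · rw [hM1 j]
        rw [Finset.sum_congr rfl (fun c (_ : c ∈ Finset.univ) =>
          (show Cm ⟨1, hiv⟩ c * V c j
              = w2 (2 + n - 1 - (c : ℕ)) * z j ^ (2 + n - 1 - (c : ℕ)) by
            simp [hCm, hV]))]
        exact (rev_sum (2+n) (fun c => w2 c * z j ^ c)).symm
    · rw [hMi ⟨iv, hiv⟩ j hge]
      have hsum : ∑ c : Fin (2+n), Cm ⟨iv, hiv⟩ c * V c j
          = Cm ⟨iv, hiv⟩ ⟨iv, hiv⟩ * V ⟨iv, hiv⟩ j := by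
        apply Finset.sum_eq_single_of_mem _ (Finset.mem_univ _)
        intro c _ hne
        have hcv : ¬ (iv = (c : ℕ)) := by
          intro h
          exact hne (Fin.ext h.symm)
        have h0 : ¬ (iv = 0) := by omega
        have h1 : ¬ (iv = 1) := by omega
        simp [hCm, h0, h1, hcv]
      rw [hsum]
      have h0 : ¬ (iv = 0) := by omega
      have h1 : ¬ (iv = 1) := by omega
      simp [hCm, hV, h0, h1]
  have hCmdet : Cm.det = w1 (2+n-1) * w2 (2+n-1-1) - w1 (2+n-1-1) * w2 (2+n-1) := by
    have hsub : (Cm.submatrix finSumFinEquiv finSumFinEquiv)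
        = Matrix.fromBlocks
            !![w1 (2+n-1), w1 (2+n-1-1); w2 (2+n-1), w2 (2+n-1-1)]
            (Matrix.of fun (r : Fin 2) (c : Fin n) =>
              Cm (finSumFinEquiv (Sum.inl r)) (finSumFinEquiv (Sum.inr c)))
            0 1 := by
      ext rc cc
      rcases rc with r | r <;> rcases cc with c | c
      · fin_cases r <;> fin_cases c <;>
          simp [hCm, Matrix.submatrix, Matrix.fromBlocks] <;> simp [Fin.ext_iff]
      · rfl
      · have hval : ((finSumFinEquiv (Sum.inr r) : Fin (2+n)) : ℕ) = 2 + (r : ℕ) := by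
          rw [finSumFinEquiv_apply_right]; rfl
        have hval2 : ((finSumFinEquiv (Sum.inl c) : Fin (2+n)) : ℕ) = (c : ℕ) := by
          rw [finSumFinEquiv_apply_left]; rfl
        have hc2 : (c : ℕ) < 2 := c.isLt
        simp only [Matrix.submatrix_apply, Matrix.fromBlocks_apply₂₁, hCm, Matrix.of_apply,
          hval, hval2]
        rw [if_neg (by omega), if_neg (by omega), if_neg (by omega), Matrix.zero_apply]
      · have hval : ((finSumFinEquiv (Sum.inr r) : Fin (2+n)) : ℕ) = 2 + (r : ℕ) := by
          rw [finSumFinEquiv_apply_right]; rfl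
        have hvalc : ((finSumFinEquiv (Sum.inr c) : Fin (2+n)) : ℕ) = 2 + (c : ℕ) := by
          rw [finSumFinEquiv_apply_right]; rfl
        simp only [Matrix.submatrix_apply, Matrix.fromBlocks_apply₂₂, hCm, Matrix.of_apply,
          hval, hvalc]
        rw [if_neg (by omega), if_neg (by omega)]
        rw [Matrix.one_apply]
        by_cases hrc : r = c
        · subst hrc
          rw [if_pos rfl, if_pos rfl]
        · rw [if_neg (by
            intro h
            exact hrc (Fin.ext (by omega))), if_neg hrc]
    have := Matrix.det_submatrix_equiv_self finSumFinEquiv Cm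
    rw [← this, hsub, Matrix.det_fromBlocks_zero₂₁, Matrix.det_one, mul_one,
      Matrix.det_fin_two_of]
  rw [hMeq, Matrix.det_mul, hCmdet]
  have e1 : 2 + n - 1 - 1 = 2 + n - 2 := by omega
  rw [e1]

noncomputable def Ud (N b E lam : ℕ) : RR := (((X:RR) - C 1)^b * X^E * Qs N^lam) %ₘ Pm N

lemma Ud_natDegree_lt (N b E lam : ℕ) (hN : 1 ≤ N) : (Ud N b E lam).natDegree < N := by
  rcases eq_or_ne (Ud N b E lam) 0 with h | h
  · rw [h, natDegree_zero]; omega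
  · have hd := degree_modByMonic_lt (((X:RR) - C 1)^b * X^E * Qs N^lam) (Pm_monic N hN)
    rw [Pm_degree N hN] at hd
    have := (natDegree_lt_iff_degree_lt h).mpr (by exact_mod_cast hd)
    exact this

noncomputable def Gpoly (N lam1 lam2 d a m2 b2 : ℕ) : Polynomial ℚ :=
  (-X)^(2+m2) *
    ((Ud N a (d+(N-1)+2*(N-2)) (lam1+1)).coeff (N-1)
        * (Ud N b2 (d+(N-2)+m2*(N-2)) lam2).coeff (N-2)
      - (Ud N a (d+(N-1)+2*(N-2)) (lam1+1)).coeff (N-2)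
        * (Ud N b2 (d+(N-2)+m2*(N-2)) lam2).coeff (N-1))

lemma det_formula {K : Type*} [Field K] [CharZero K] (N : ℕ) (hN : 4 ≤ N) (τ : K)
    (z : Fin N → K) (hz0 : ∀ j, z j ≠ 0)
    (hrel : ∀ j, (z j - 1)^N = -(τ * (z j)^(N-2)))
    (lam1 lam2 d a m2 b2 : ℕ)
    (hs1 : lam1 + 1 = 2*N + a) (hs2 : lam2 = m2*N + b2) :
    (Matrix.det (Matrix.of fun i j : Fin N =>
      (if h : (i : ℕ) < 2 then
        (![fun w => w ^ d * (1 - w⁻¹) ^ (lam1 + 1), fun w => w ^ d * (1 - w⁻¹) ^ lam2]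
          : Fin 2 → K → K) ⟨i, h⟩ (z j) else 1) * z j ^ ((N : ℤ) - 1 - ((i : ℕ) : ℤ))))
    = Polynomial.aeval τ (Gpoly N lam1 lam2 d a m2 b2) *
      (Matrix.det (Matrix.of fun i j : Fin N => z j ^ ((N : ℤ) - 1 - ((i : ℕ) : ℤ)))) := by
  have hN1 : 1 ≤ N := by omega
  have hN3 : 3 ≤ N := by omega
  set ψ : Polynomial ℚ →+* K := (Polynomial.aeval τ : Polynomial ℚ →ₐ[ℚ] K).toRingHom with hψ
  have hψX : ψ X = τ := by simp [hψ]
  have hPz : ∀ j, eval₂ ψ (z j) (Pm N) = 0 := by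
    intro j
    rw [evz_Pm N ψ (z j), hψX, hrel j]
    ring
  set E1 := d + (N-1) + 2*(N-2) with hE1
  set E2 := d + (N-2) + m2*(N-2) with hE2
  set w1 : ℕ → K := fun c => (-τ)^2 * ψ ((Ud N a E1 (lam1+1)).coeff c) with hw1
  set w2 : ℕ → K := fun c => (-τ)^m2 * ψ ((Ud N b2 E2 lam2).coeff c) with hw2
  set M : Matrix (Fin N) (Fin N) K := Matrix.of fun i j : Fin N =>
      (if h : (i : ℕ) < 2 then
        (![fun w => w ^ d * (1 - w⁻¹) ^ (lam1 + 1), fun w => w ^ d * (1 - w⁻¹) ^ lam2] : Fin 2 → K → K)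
          ⟨i, h⟩ (z j) else 1) * z j ^ ((N : ℤ) - 1 - ((i : ℕ) : ℤ)) with hM
  have hrow : ∀ (b lam E0 m : ℕ), lam = m * N + b → ∀ j,
      (1 - (z j)⁻¹)^lam * (z j)^E0
        = (-τ)^m * eval₂ ψ (z j) (Ud N b (E0 + m*(N-2)) lam) := by
    intro b lam E0 m hsplit j
    rw [row_reduce N τ (z j) (hz0 j) (hrel j) lam b m E0 hsplit]
    rw [Ud, evz_elt N hN3 ψ (z j) (hz0 j) (hPz j) b (E0 + m*(N-2)) lam]
  have hM0 : ∀ j, M ⟨0, by omega⟩ j = ∑ c ∈ Finset.range N, w1 c * z j ^ c := by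
    intro j
    have hent : M ⟨0, by omega⟩ j
        = (z j ^ d * (1 - (z j)⁻¹) ^ (lam1 + 1)) * z j ^ ((N : ℤ) - 1 - ((0:ℕ) : ℤ)) := by
      simp [hM]
    rw [hent]
    have hzp : (z j) ^ ((N : ℤ) - 1 - ((0:ℕ) : ℤ)) = (z j) ^ (N - 1 : ℕ) := by
      rw [show ((N : ℤ) - 1 - ((0:ℕ) : ℤ)) = ((N - 1 : ℕ) : ℤ) by push_cast; omega]
      exact zpow_natCast _ _
    rw [hzp]
    have hcollect : (z j ^ d * (1 - (z j)⁻¹) ^ (lam1 + 1)) * z j ^ (N - 1 : ℕ)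
        = (1 - (z j)⁻¹)^(lam1+1) * (z j)^(d + (N-1)) := by
      rw [pow_add]; ring
    rw [hcollect, hrow a (lam1+1) (d + (N-1)) 2 hs1 j]
    rw [eval₂_eq_sum_range' ψ (Ud_natDegree_lt N a E1 (lam1+1) hN1) (z j)]
    rw [Finset.mul_sum]
    apply Finset.sum_congr rfl
    intro c _
    rw [hw1]
    ring
  have hM1 : ∀ j, M ⟨1, by omega⟩ j = ∑ c ∈ Finset.range N, w2 c * z j ^ c := by
    intro j
    have hent : M ⟨1, by omega⟩ j
        = (z j ^ d * (1 - (z j)⁻¹) ^ lam2) * z j ^ ((N : ℤ) - 1 - ((1:ℕ) : ℤ)) := by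
      simp [hM]
    rw [hent]
    have hzp : (z j) ^ ((N : ℤ) - 1 - ((1:ℕ) : ℤ)) = (z j) ^ (N - 2 : ℕ) := by
      rw [show ((N : ℤ) - 1 - ((1:ℕ) : ℤ)) = ((N - 2 : ℕ) : ℤ) by push_cast; omega]
      exact zpow_natCast _ _
    rw [hzp]
    have hcollect : (z j ^ d * (1 - (z j)⁻¹) ^ lam2) * z j ^ (N - 2 : ℕ)
        = (1 - (z j)⁻¹)^lam2 * (z j)^(d + (N-2)) := by
      rw [pow_add]; ring
    rw [hcollect, hrow b2 lam2 (d + (N-2)) m2 hs2 j]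
    rw [eval₂_eq_sum_range' ψ (Ud_natDegree_lt N b2 E2 lam2 hN1) (z j)]
    rw [Finset.mul_sum]
    apply Finset.sum_congr rfl
    intro c _
    rw [hw2]
    ring
  have hMi : ∀ (i : Fin N) (j : Fin N), 2 ≤ (i : ℕ) → M i j = z j ^ (N - 1 - (i : ℕ)) := by
    intro i j hi
    have hent : M i j = 1 * z j ^ ((N : ℤ) - 1 - ((i:ℕ) : ℤ)) := by
      rw [hM, Matrix.of_apply, dif_neg (by omega)]
    rw [hent, one_mul]
    rw [show ((N : ℤ) - 1 - ((i:ℕ) : ℤ)) = ((N - 1 - (i:ℕ) : ℕ) : ℤ) by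
      have := i.isLt; push_cast; omega]
    exact zpow_natCast _ _
  have hdet := det_decomp N (by omega) z M w1 w2 hM0 hM1 hMi
  have hVeq : (Matrix.of fun i j : Fin N => z j ^ (N - 1 - (i : ℕ)))
      = (Matrix.of fun i j : Fin N => z j ^ ((N : ℤ) - 1 - ((i : ℕ) : ℤ))) := by
    ext i j
    simp only [Matrix.of_apply]
    rw [show ((N : ℤ) - 1 - ((i:ℕ) : ℤ)) = ((N - 1 - (i:ℕ) : ℕ) : ℤ) by
      have := i.isLt; push_cast; omega]
    exact (zpow_natCast _ _).symm
  rw [hdet, hVeq]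
  congr 1
  rw [Gpoly]
  rw [map_mul, map_sub, map_mul, map_mul, map_pow, map_neg, Polynomial.aeval_X]
  rw [hw1, hw2]
  have hcoe : ∀ u : Polynomial ℚ, ψ u = Polynomial.aeval τ u := fun u => rfl
  rw [← hcoe, ← hcoe, ← hcoe, ← hcoe]
  rw [pow_add]
  ring

end KSide

lemma slice_main (N b1 q1 b2 q2 d E u v : ℕ) (hN : 4 ≤ N) (hb1 : b1 < N) (hb2 : b2 < N)
    (hu : b1 + q1 + u = d + N - 1) (hv : b2 + q2 + v = d + N - 1)
    (hu1 : 1 ≤ u) (hv1 : 1 ≤ v) (hueven : u % 2 = 0)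
    (hu2 : u ≤ d + 1) (hv2 : v ≤ d + 1)
    (hE : u + v + 2*E = 2*d + 1) :
    (cv N b1 q1 (N-1) * cv N b2 q2 (N-2)
      - cv N b1 q1 (N-2) * cv N b2 q2 (N-1)).coeff E = (-1)^(E+d) := by
  have inv1 := inv_cv N hN b1 hb1 q1
  have inv2 := inv_cv N hN b2 hb2 q2
  rw [coeff_sub]
  rcases Nat.even_or_odd d with hpar | hpar
  · -- d even : β1·α2 contributes
    obtain ⟨t, ht⟩ := hpar
    obtain ⟨x, hx⟩ : ∃ x, d = u + 2*x := ⟨(d-u)/2, by omega⟩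
    obtain ⟨y, hy⟩ : ∃ y, d + 1 = v + 2*y := ⟨(d+1-v)/2, by omega⟩
    have hxy : x + y = E := by omega
    have h1 : (cv N b1 q1 (N-1) * cv N b2 q2 (N-2)).coeff E = (-1)^x * (-1)^y := by
      rw [coeff_mul_single _ _ E x y hxy]
      · rw [(inv1 (N-1) x (by omega)).2 (by omega), (inv2 (N-2) y (by omega)).2 (by omega),
          tv_hi N (N-1) x (by omega), tv_hi N (N-2) y (by omega)]
      · intro xx yy hsum hne
        by_cases hxx : d < u + 2*xx
        · exact Or.inl ((inv1 (N-1) xx (by omega)).1 (by omega))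
        · exact Or.inr ((inv2 (N-2) yy (by omega)).1 (by omega))
    have h2 : (cv N b1 q1 (N-2) * cv N b2 q2 (N-1)).coeff E = 0 := by
      apply coeff_mul_zero_of
      intro xx yy hsum
      by_cases hxx : d + 1 < u + 2*xx
      · exact Or.inl ((inv1 (N-2) xx (by omega)).1 (by omega))
      · exact Or.inr ((inv2 (N-1) yy (by omega)).1 (by omega))
    rw [h1, h2, ← pow_add, hxy, sub_zero, pow_add]
    have hdeven : ((-1:ℚ))^d = 1 := Even.neg_one_pow ⟨t, by omega⟩
    rw [hdeven, mul_one]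
  · -- d odd : α1·β2 contributes
    obtain ⟨t, ht⟩ := hpar
    obtain ⟨x, hx⟩ : ∃ x, d + 1 = u + 2*x := ⟨(d+1-u)/2, by omega⟩
    obtain ⟨y, hy⟩ : ∃ y, d = v + 2*y := ⟨(d-v)/2, by omega⟩
    have hxy : x + y = E := by omega
    have h1 : (cv N b1 q1 (N-1) * cv N b2 q2 (N-2)).coeff E = 0 := by
      apply coeff_mul_zero_of
      intro xx yy hsum
      by_cases hxx : d < u + 2*xx
      · exact Or.inl ((inv1 (N-1) xx (by omega)).1 (by omega))
      · exact Or.inr ((inv2 (N-2) yy (by omega)).1 (by omega))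
    have h2 : (cv N b1 q1 (N-2) * cv N b2 q2 (N-1)).coeff E = (-1)^x * (-1)^y := by
      rw [coeff_mul_single _ _ E x y hxy]
      · rw [(inv1 (N-2) x (by omega)).2 (by omega), (inv2 (N-1) y (by omega)).2 (by omega),
          tv_hi N (N-2) x (by omega), tv_hi N (N-1) y (by omega)]
      · intro xx yy hsum hne
        by_cases hxx : d + 1 < u + 2*xx
        · exact Or.inl ((inv1 (N-2) xx (by omega)).1 (by omega))
        · exact Or.inr ((inv2 (N-1) yy (by omega)).1 (by omega))
    rw [h1, h2, zero_sub, ← pow_add, hxy]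
    have h3 : ((-1:ℚ))^(E+d) = -(-1)^E := by
      rw [show E + d = E + 1 + (d - 1) by omega, pow_add, pow_add, pow_one]
      have hev : ((-1:ℚ))^(d-1) = 1 := Even.neg_one_pow ⟨t, by omega⟩
      rw [hev]
      ring
    rw [h3]


lemma vdet_ne {K : Type*} [Field K] (N : ℕ) (z : Fin N → K) (hz : Function.Injective z) :
    (Matrix.det (Matrix.of fun i j : Fin N => z j ^ ((N:ℤ) - 1 - ((i:ℕ):ℤ)))) ≠ 0 := by
  have hVeq : (Matrix.of fun i j : Fin N => z j ^ ((N:ℤ)-1-((i:ℕ):ℤ)))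
      = (Matrix.transpose (Matrix.vandermonde z)).submatrix Fin.revPerm id := by
    ext i j
    simp only [Matrix.of_apply, Matrix.transpose_apply, Matrix.vandermonde,
      Matrix.submatrix_apply, id_eq]
    have hval : ((Fin.revPerm i : Fin N) : ℕ) = N - (i + 1) := Fin.val_rev i
    rw [show ((N:ℤ)-1-((i:ℕ):ℤ)) = (((Fin.revPerm i : Fin N) : ℕ) : ℤ) by
      rw [hval]; have := i.isLt; push_cast; omega]
    exact zpow_natCast _ _
  rw [hVeq, Matrix.det_permute]
  apply mul_ne_zero
  · rcases Int.units_eq_one_or (Equiv.Perm.sign (Fin.revPerm : Equiv.Perm (Fin N))) with h | h <;>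
      rw [h] <;> norm_num
  · rw [Matrix.det_transpose, Matrix.det_vandermonde]
    rw [Finset.prod_ne_zero_iff]
    intro i _
    rw [Finset.prod_ne_zero_iff]
    intro j hj
    have hij : i < j := Finset.mem_Ioi.mp hj
    intro hzz
    have : z j = z i := by linear_combination hzz
    exact absurd (hz this) (Fin.ne_of_gt hij)

lemma Gpoly_coeff_small (N lam1 lam2 d a m2 b2 : ℕ) (hd : d < 2 + m2) :
    (Gpoly N lam1 lam2 d a m2 b2).coeff d = 0 := by
  rw [Gpoly]
  have hneg : ((-X : Polynomial ℚ))^(2+m2) = C ((-1:ℚ)^(2+m2)) * X^(2+m2) := by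
    rw [neg_pow, map_pow, map_neg, map_one]
  rw [hneg, mul_assoc, coeff_C_mul]
  rw [coeff_pow_mul_lt _ _ _ hd, mul_zero]

lemma Gpoly_coeff_big (N lam1 lam2 d a m2 b2 q1 q2 E : ℕ) (hN : 4 ≤ N)
    (ha : a < N) (hb2 : b2 < N)
    (hq1 : d + (N-1) + 2*(N-2) = q1 + (lam1+1))
    (hq2 : d + (N-2) + m2*(N-2) = q2 + lam2)
    (hs1 : lam1 + 1 = 2*N + a) (hs2 : lam2 = m2*N + b2)
    (hE : d = E + (2+m2)) :
    (Gpoly N lam1 lam2 d a m2 b2).coeff d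
      = (-1)^(2+m2) * (cv N a q1 (N-1) * cv N b2 q2 (N-2)
          - cv N a q1 (N-2) * cv N b2 q2 (N-1)).coeff E := by
  have hU1 : Ud N a (d+(N-1)+2*(N-2)) (lam1+1) = pol N a q1 :=
    mod_eq_pol N (by omega) a q1 (lam1+1) _ ha hq1
  have hU2 : Ud N b2 (d+(N-2)+m2*(N-2)) lam2 = pol N b2 q2 :=
    mod_eq_pol N (by omega) b2 q2 lam2 _ hb2 hq2
  rw [Gpoly, hU1, hU2,
    pol_coeff_top N a q1 (by omega), pol_coeff_next N a q1 (by omega),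
    pol_coeff_top N b2 q2 (by omega), pol_coeff_next N b2 q2 (by omega)]
  have hB : cv N a q1 (N-1) * (cv N b2 q2 (N-2) - ((N-1:ℕ) : Polynomial ℚ) * cv N b2 q2 (N-1))
      - (cv N a q1 (N-2) - ((N-1:ℕ) : Polynomial ℚ) * cv N a q1 (N-1)) * cv N b2 q2 (N-1)
      = cv N a q1 (N-1) * cv N b2 q2 (N-2) - cv N a q1 (N-2) * cv N b2 q2 (N-1) := by
    ring
  rw [hB]
  have hneg : ((-X : Polynomial ℚ))^(2+m2) = C ((-1:ℚ)^(2+m2)) * X^(2+m2) := by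
    rw [neg_pow, map_pow, map_neg, map_one]
  rw [hneg, mul_assoc, coeff_C_mul]
  congr 1
  rw [show d = E + (2+m2) from hE]
  exact coeff_X_pow_mul _ _ _

end Stmt11Aux



/-- The generalized Schur function `s_{(f_1,…,f_r)}(z_1,…,z_N)` attached to functions
`f_1,…,f_r`: `det(M) / det(z_j^{N-i})` where `M_{i,j} = f_i(z_j)·z_j^{N-i}` for `i ≤ r`
and `M_{i,j} = z_j^{N-i}` for `i > r`. -/
noncomputable def genSchurFun {K : Type*} [Field K] (N r : ℕ) (f : Fin r → K → K)
    (z : Fin N → K) : K :=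
  Matrix.det (Matrix.of fun i j : Fin N =>
      (if h : (i : ℕ) < r then f ⟨i, h⟩ (z j) else 1) * z j ^ ((N : ℤ) - 1 - ((i : ℕ) : ℤ))) /
  Matrix.det (Matrix.of fun i j : Fin N => z j ^ ((N : ℤ) - 1 - ((i : ℕ) : ℤ)))

/-- `s_{(f_1,f_2)}(z_1,…,z_N)` for `f_1(z) = z^d (1-z⁻¹)^{λ_1+1}`,
`f_2(z) = z^d (1-z⁻¹)^{λ_2}`. -/
noncomputable def svalRank2 {K : Type*} [Field K] (N : ℕ) (z : Fin N → K)
    (lam1 lam2 d : ℕ) : K :=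
  genSchurFun N 2
    ![fun w => w ^ d * (1 - w⁻¹) ^ (lam1 + 1), fun w => w ^ d * (1 - w⁻¹) ^ lam2] z

/-- Rank-2 roots setup (`k = N-2`,
`∏(X - z_i) = (X-1)^N + τ X^{N-2}`, `τ` transcendental over `ℚ`). For a partition
`λ = (λ_1 ≥ λ_2 ≥ 0)` with `2k+2 < λ_1 ≤ 3k+1`: if `λ_2 < 2N` then `c_d = 0` for `d ≤ 2`
and `c_d = 1` for `d ≥ 3`; if `λ_2 ≥ 2N` then `c_d = 0` for `d ≤ 3` and `c_d = 1` for
`d ≥ 4`. -/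
theorem stmt11 {K : Type*} [Field K] [CharZero K] (N : ℕ) (hN : 3 ≤ N)
    (k : ℕ) (hk : k = N - 2)
    (τ : K) (hτ : Transcendental ℚ τ)
    (z : Fin N → K) (hz : Function.Injective z)
    (hroots : ∏ i, (Polynomial.X - Polynomial.C (z i)) =
      (Polynomial.X - Polynomial.C (1 : K)) ^ N + Polynomial.C τ * Polynomial.X ^ (N - 2))
    (lam1 lam2 : ℕ) (hlam : lam2 ≤ lam1)
    (hlo : 2 * k + 2 < lam1) (hup : lam1 ≤ 3 * k + 1) :
    (lam2 < 2 * N →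
      (∀ d : ℕ, d ≤ 2 → ∀ F : Polynomial ℚ,
        Polynomial.aeval τ F = svalRank2 N z lam1 lam2 d → F.coeff d = 0) ∧
      (∀ d : ℕ, 3 ≤ d → ∀ F : Polynomial ℚ,
        Polynomial.aeval τ F = svalRank2 N z lam1 lam2 d → F.coeff d = 1)) ∧
    (2 * N ≤ lam2 →
      (∀ d : ℕ, d ≤ 3 → ∀ F : Polynomial ℚ,
        Polynomial.aeval τ F = svalRank2 N z lam1 lam2 d → F.coeff d = 0) ∧
      (∀ d : ℕ, 4 ≤ d → ∀ F : Polynomial ℚ,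
        Polynomial.aeval τ F = svalRank2 N z lam1 lam2 d → F.coeff d = 1)) := by
  have hN4 : 4 ≤ N := by omega
  -- root relations
  have hrel : ∀ j, (z j - 1)^N = -(τ * (z j)^(N-2)) := by
    intro j
    have h := congrArg (Polynomial.eval (z j)) hroots
    simp only [Polynomial.eval_prod, Polynomial.eval_add, Polynomial.eval_pow,
      Polynomial.eval_mul, Polynomial.eval_sub, Polynomial.eval_X, Polynomial.eval_C] at h
    have hzero : (∏ i, (z j - z i)) = 0 :=
      Finset.prod_eq_zero (Finset.mem_univ j) (sub_self _)
    rw [hzero] at h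
    linear_combination -h
  have hz0 : ∀ j, z j ≠ 0 := by
    intro j hzj
    have h := congrArg (Polynomial.eval 0) hroots
    simp only [Polynomial.eval_prod, Polynomial.eval_add, Polynomial.eval_pow,
      Polynomial.eval_mul, Polynomial.eval_sub, Polynomial.eval_X, Polynomial.eval_C] at h
    have hzero : (∏ i, ((0:K) - z i)) = 0 :=
      Finset.prod_eq_zero (Finset.mem_univ j) (by rw [hzj, sub_zero])
    rw [hzero, zero_pow (by omega : N - 2 ≠ 0), mul_zero, add_zero] at h
    have : ((0:K) - 1)^N ≠ 0 := pow_ne_zero _ (by norm_num)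
    exact this h.symm
  have hVdet := Stmt11Aux.vdet_ne N z hz
  have hinj : Function.Injective (Polynomial.aeval τ : Polynomial ℚ →ₐ[ℚ] K) :=
    transcendental_iff_injective.mp hτ
  have master : ∀ d m2 b2 a, lam1 + 1 = 2*N + a → lam2 = m2*N + b2 →
      ∀ F : Polynomial ℚ, Polynomial.aeval τ F = svalRank2 N z lam1 lam2 d →
        F = Stmt11Aux.Gpoly N lam1 lam2 d a m2 b2 := by
    intro d m2 b2 a hs1 hs2 F hF
    apply hinj
    show Polynomial.aeval τ F = Polynomial.aeval τ _
    rw [hF]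
    unfold svalRank2 genSchurFun
    rw [Stmt11Aux.det_formula N hN4 τ z hz0 hrel lam1 lam2 d a m2 b2 hs1 hs2]
    exact mul_div_cancel_right₀ _ hVdet
  set a := lam1 + 1 - 2*N with hadef
  have hs1 : lam1 + 1 = 2*N + a := by omega
  have haN : a < N := by omega
  constructor
  · -- lam2 < 2N
    intro hcase
    rcases Nat.lt_or_ge lam2 N with hA | hB
    · -- m2 = 0
      have hs2 : lam2 = 0*N + lam2 := by omega
      constructor
      · intro d hd F hF
        rw [master d 0 lam2 a hs1 hs2 F hF]
        rcases Nat.lt_or_ge d 2 with hd2 | hd2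
        · exact Stmt11Aux.Gpoly_coeff_small N lam1 lam2 d a 0 lam2 (by omega)
        · -- d = 2
          have hd2' : d = 2 := by omega
          subst hd2'
          have hq1 : (2:ℕ) + (N-1) + 2*(N-2) = (2 + (N-1) + 2*(N-2) - (lam1+1)) + (lam1+1) := by
            omega
          have hq2 : (2:ℕ) + (N-2) + 0*(N-2) = (2 + (N-2) - lam2) + lam2 := by omega
          rw [Stmt11Aux.Gpoly_coeff_big N lam1 lam2 2 a 0 lam2
            (2 + (N-1) + 2*(N-2) - (lam1+1)) (2 + (N-2) - lam2) 0 hN4 haN (by omega)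
            hq1 hq2 hs1 hs2 (by omega)]
          have inv1 := Stmt11Aux.inv_cv N hN4 a haN (2 + (N-1) + 2*(N-2) - (lam1+1))
          have hb1 : (Stmt11Aux.cv N a (2 + (N-1) + 2*(N-2) - (lam1+1)) (N-1)).coeff 0 = 0 :=
            (inv1 (N-1) 0 (by omega)).1 (by omega)
          have hb2 : (Stmt11Aux.cv N a (2 + (N-1) + 2*(N-2) - (lam1+1)) (N-2)).coeff 0 = 0 :=
            (inv1 (N-2) 0 (by omega)).1 (by omega)
          rw [Polynomial.coeff_sub, Polynomial.mul_coeff_zero, Polynomial.mul_coeff_zero,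
            hb1, hb2]
          ring
      · intro d hd3 F hF
        rw [master d 0 lam2 a hs1 hs2 F hF]
        have hq1 : d + (N-1) + 2*(N-2) = (d + (N-1) + 2*(N-2) - (lam1+1)) + (lam1+1) := by
          omega
        have hq2 : d + (N-2) + 0*(N-2) = (d + (N-2) - lam2) + lam2 := by omega
        rw [Stmt11Aux.Gpoly_coeff_big N lam1 lam2 d a 0 lam2
          (d + (N-1) + 2*(N-2) - (lam1+1)) (d + (N-2) - lam2) (d - 2) hN4 haN (by omega)
          hq1 hq2 hs1 hs2 (by omega)]
        rw [Stmt11Aux.slice_main N a (d + (N-1) + 2*(N-2) - (lam1+1)) lam2 (d + (N-2) - lam2)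
          d (d-2) 4 1 hN4 haN (by omega) (by omega) (by omega) (by omega) (by omega)
          (by omega) (by omega) (by omega) (by omega)]
        rw [← pow_add]
        exact Even.neg_one_pow ⟨d, by omega⟩
    · -- m2 = 1
      have hs2 : lam2 = 1*N + (lam2 - N) := by omega
      have hb2N : lam2 - N < N := by omega
      constructor
      · intro d hd F hF
        rw [master d 1 (lam2 - N) a hs1 hs2 F hF]
        exact Stmt11Aux.Gpoly_coeff_small N lam1 lam2 d a 1 (lam2 - N) (by omega)
      · intro d hd3 F hF
        rw [master d 1 (lam2 - N) a hs1 hs2 F hF]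
        have hq1 : d + (N-1) + 2*(N-2) = (d + (N-1) + 2*(N-2) - (lam1+1)) + (lam1+1) := by
          omega
        have hq2 : d + (N-2) + 1*(N-2) = (d + (N-2) + 1*(N-2) - lam2) + lam2 := by omega
        rw [Stmt11Aux.Gpoly_coeff_big N lam1 lam2 d a 1 (lam2 - N)
          (d + (N-1) + 2*(N-2) - (lam1+1)) (d + (N-2) + 1*(N-2) - lam2) (d - 3) hN4 haN hb2N
          hq1 hq2 hs1 hs2 (by omega)]
        rw [Stmt11Aux.slice_main N a (d + (N-1) + 2*(N-2) - (lam1+1)) (lam2 - N)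
          (d + (N-2) + 1*(N-2) - lam2) d (d-3) 4 3 hN4 haN hb2N (by omega) (by omega)
          (by omega) (by omega) (by omega) (by omega) (by omega) (by omega)]
        rw [← pow_add]
        exact Even.neg_one_pow ⟨d, by omega⟩
  · -- 2N ≤ lam2 : m2 = 2
    intro hcase
    have hup2 : lam2 ≤ 3*N - 5 := by omega
    have hs2 : lam2 = 2*N + (lam2 - 2*N) := by omega
    have hb2N : lam2 - 2*N < N := by omega
    constructor
    · intro d hd F hF
      rw [master d 2 (lam2 - 2*N) a hs1 hs2 F hF]
      exact Stmt11Aux.Gpoly_coeff_small N lam1 lam2 d a 2 (lam2 - 2*N) (by omega)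
    · intro d hd4 F hF
      rw [master d 2 (lam2 - 2*N) a hs1 hs2 F hF]
      have hq1 : d + (N-1) + 2*(N-2) = (d + (N-1) + 2*(N-2) - (lam1+1)) + (lam1+1) := by
        omega
      have hq2 : d + (N-2) + 2*(N-2) = (d + (N-2) + 2*(N-2) - lam2) + lam2 := by omega
      rw [Stmt11Aux.Gpoly_coeff_big N lam1 lam2 d a 2 (lam2 - 2*N)
        (d + (N-1) + 2*(N-2) - (lam1+1)) (d + (N-2) + 2*(N-2) - lam2) (d - 4) hN4 haN hb2N
        hq1 hq2 hs1 hs2 (by omega)]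
      rw [Stmt11Aux.slice_main N a (d + (N-1) + 2*(N-2) - (lam1+1)) (lam2 - 2*N)
        (d + (N-2) + 2*(N-2) - lam2) d (d-4) 4 5 hN4 haN hb2N (by omega) (by omega)
        (by omega) (by omega) (by omega) (by omega) (by omega) (by omega)]
      rw [← pow_add]
      exact Even.neg_one_pow ⟨d, by omega⟩
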